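/- Let R be a commutative domain and Λ an R-algebra. Let L, M be Λ-modules that are finitely generated over R, and suppose Ext^1_Λ(L, tM) = 0, where tM is the R-torsion submodule of M. Then the quotient Hom_Λ(L,M)/t(Hom_Λ(L,M)) of Hom_Λ(L,M) by its R-torsion submodule is isomorphic to Hom_Λ(L/tL, M/tM). -/

import Mathlib

open CategoryTheory CategoryTheory.Abelian CategoryTheory.Limits

universe u

namespace ExtAuxForStatement2

universe w w' v u'

variable {C : Type u'} [Category.{v} C] [Abelian C] [HasExt.{w} C]

noncomputable section
open DerivedCategory

section
variable [HasDerivedCategory.{w'} C]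

/-- The isomorphism `singleFunctor C 0 ⋙ homologyFunctor C 0 ≅ 𝟭 C`. -/
def e : DerivedCategory.singleFunctor C 0 ⋙ DerivedCategory.homologyFunctor C 0 ≅ 𝟭 C :=
  Functor.isoWhiskerRight ((SingleFunctors.evaluation _ _ (0 : ℤ)).mapIso
    (singleFunctorsPostcompQIso C)) (homologyFunctor C 0) ≪≫
  Functor.associator _ _ _ ≪≫
  Functor.isoWhiskerLeft (CochainComplex.singleFunctor C 0) (homologyFunctorFactors C 0) ≪≫
  HomologicalComplex.homologyFunctorSingleIso C (ComplexShape.up ℤ) 0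

/-- The morphism in `C` underlying a degree-zero `Ext` class. -/
def extToHom {X Y : C} (α : Abelian.Ext X Y 0) : X ⟶ Y :=
  e.inv.app X ≫ (homologyFunctor C 0).map
    ((ShiftedHom.homEquiv ((0:ℕ) : ℤ) (by simp)).symm α.hom) ≫ e.hom.app Y

lemma extToHom_mk₀ {X Y : C} (f : X ⟶ Y) : extToHom (Abelian.Ext.mk₀ f) = f := by
  rw [extToHom, Abelian.Ext.mk₀_hom]
  have h1 : (ShiftedHom.homEquiv (C := DerivedCategory C) ((0:ℕ) : ℤ) (by simp)).symm
      (ShiftedHom.mk₀ ((0:ℕ) : ℤ) (by simp) ((singleFunctor C 0).map f))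
      = (singleFunctor C 0).map f := by
    rw [← ShiftedHom.homEquiv_apply, Equiv.symm_apply_apply]
  rw [h1]
  have h2 := e (C := C).hom.naturality f
  dsimp at h2 ⊢
  rw [h2, ← Category.assoc, Iso.inv_hom_id_app]
  simp

lemma extToHom_comp_mk₀ {X Y Z : C} (α : Abelian.Ext X Y 0) (h : Y ⟶ Z) :
    extToHom (α.comp (Abelian.Ext.mk₀ h) (add_zero 0)) = extToHom α ≫ h := by
  have hc : (α.comp (Abelian.Ext.mk₀ h) (add_zero 0)).hom
      = α.hom.comp (Abelian.Ext.mk₀ h).hom (by simp) := Abelian.Ext.comp_hom _ _ _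
  rw [extToHom, hc, Abelian.Ext.mk₀_hom, ShiftedHom.comp_mk₀]
  have hsymm : ∀ (W : DerivedCategory C) (g : ShiftedHom ((singleFunctor C 0).obj X) W ((0:ℕ):ℤ)),
      (ShiftedHom.homEquiv ((0:ℕ) : ℤ) (by simp)).symm g
        = g ≫ (shiftFunctorZero' (DerivedCategory C) ((0:ℕ):ℤ) (by simp)).hom.app W := by
    intro W g; rfl
  rw [hsymm]
  rw [Category.assoc, (shiftFunctorZero' (DerivedCategory C) ((0:ℕ):ℤ) (by simp)).hom.naturality
    ((singleFunctor C 0).map h)]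
  rw [extToHom, hsymm]
  have h2 := e (C := C).hom.naturality h
  dsimp at h2 ⊢
  rw [Functor.map_comp, Functor.map_comp]
  simp only [Category.assoc]
  rw [h2]
  rw [Functor.map_comp]
  simp only [Category.assoc]

end

/-- If `Ext¹(X, S.X₁)` vanishes, morphisms to `S.X₃` lift along the epimorphism `S.g`. -/
lemma lift_of_subsingleton_ext {S : ShortComplex C} (hS : S.ShortExact)
    (X : C) (hext : Subsingleton (Abelian.Ext X S.X₁ 1)) (g : X ⟶ S.X₃) :
    ∃ f : X ⟶ S.X₂, f ≫ S.g = g := by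
  letI := HasDerivedCategory.standard C
  obtain ⟨x₂, hx₂⟩ := Abelian.Ext.covariant_sequence_exact₃ X hS (Abelian.Ext.mk₀ g)
    (n₁ := 1) rfl (Subsingleton.elim _ _)
  refine ⟨extToHom x₂, ?_⟩
  rw [← extToHom_comp_mk₀ x₂ S.g, hx₂, extToHom_mk₀]

end
end ExtAuxForStatement2

/-- Let `R` be a commutative domain, `Λ` an `R`-algebra, and `L`, `M`
`Λ`-modules that are finitely generated over `R`.  Let `tL ⊆ L`, `tM ⊆ M` be the
`R`-torsion submodules (which are `Λ`-submodules).  If `Ext¹_Λ(L, tM) = 0`, then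
`Hom_Λ(L,M)/t(Hom_Λ(L,M)) ≅ Hom_Λ(L/tL, M/tM)`, where `t(Hom_Λ(L,M))` is the `R`-torsion
submodule of `Hom_Λ(L,M)`. -/
theorem hom_mod_torsion_equiv_hom_of_quotients
    (R : Type u) [CommRing R] [IsDomain R]
    (Λ : Type u) [Ring Λ] [Algebra R Λ] [HasExt.{u} (ModuleCat.{u} Λ)]
    (L M : Type u)
    [AddCommGroup L] [Module Λ L] [Module R L] [IsScalarTower R Λ L] [Module.Finite R L]
    [AddCommGroup M] [Module Λ M] [Module R M] [IsScalarTower R Λ M] [Module.Finite R M]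
    [SMulCommClass Λ R M]
    (tL : Submodule Λ L) (htL : ∀ x : L, x ∈ tL ↔ ∃ r : R, r ≠ 0 ∧ r • x = 0)
    (tM : Submodule Λ M) (htM : ∀ x : M, x ∈ tM ↔ ∃ r : R, r ≠ 0 ∧ r • x = 0)
    (hExt : Subsingleton (Ext (ModuleCat.of Λ L) (ModuleCat.of Λ (↥tM)) 1)) :
    Nonempty
      (((L →ₗ[Λ] M) ⧸ Submodule.torsion R (L →ₗ[Λ] M)) ≃ₗ[R]
        ((L ⧸ tL) →ₗ[Λ] (M ⧸ tM))) := by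
  classical
  -- every `Λ`-linear map sends `tL` into `tM`
  have hmap : ∀ f : L →ₗ[Λ] M, tL ≤ tM.comap f := by
    intro f x hx
    obtain ⟨r, hr, hrx⟩ := (htL x).1 hx
    refine Submodule.mem_comap.2 ((htM _).2 ⟨r, hr, ?_⟩)
    rw [← f.map_smul_of_tower r x, hrx, map_zero]
  -- the natural map `Hom(L,M) → Hom(L/tL, M/tM)`
  let φ : (L →ₗ[Λ] M) →ₗ[R] ((L ⧸ tL) →ₗ[Λ] (M ⧸ tM)) :=
  { toFun := fun f => tL.mapQ tM f (hmap f)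
    map_add' := by
      intro f g
      refine Submodule.linearMap_qext _ ?_
      ext x
      simp [Submodule.mapQ_apply]
    map_smul' := by
      intro r f
      refine Submodule.linearMap_qext _ ?_
      ext x
      simp [Submodule.mapQ_apply, Submodule.Quotient.mk_smul] }
  have hφ_apply : ∀ (f : L →ₗ[Λ] M) (x : L),
      φ f (Submodule.Quotient.mk x) = Submodule.Quotient.mk (f x) := by
    intro f x
    simp [φ, Submodule.mapQ_apply]
  -- kernel of `φ` is the torsion submodule
  have hker : LinearMap.ker φ = Submodule.torsion R (L →ₗ[Λ] M) := by
    ext f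
    simp only [LinearMap.mem_ker]
    constructor
    · intro h0
      have hf : ∀ x : L, f x ∈ tM := by
        intro x
        have := LinearMap.congr_fun h0 (Submodule.Quotient.mk x)
        rw [hφ_apply] at this
        exact (Submodule.Quotient.mk_eq_zero tM).1 this
      choose r hr hr0 using fun x => (htM (f x)).1 (hf x)
      obtain ⟨s, hs⟩ := Module.Finite.fg_top (R := R) (M := L)
      set c := ∏ x ∈ s, r x with hc_def
      have hc : c ≠ 0 := Finset.prod_ne_zero_iff.2 fun x _ => hr x
      have hcx : ∀ x ∈ s, c • f x = 0 := by
        intro x hx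
        obtain ⟨d, hd⟩ := Finset.dvd_prod_of_mem r hx
        rw [hc_def, hd, mul_comm, mul_smul, hr0, smul_zero]
      have hall : ∀ x : L, c • f x = 0 := by
        intro x
        have hx : x ∈ Submodule.span R (↑s : Set L) := by rw [hs]; trivial
        induction hx using Submodule.span_induction with
        | mem y hy => exact hcx y hy
        | zero => rw [map_zero, smul_zero]
        | add y z _ _ hy hz => rw [map_add, smul_add, hy, hz, add_zero]
        | smul t y _ hy =>
            rw [f.map_smul_of_tower t y, smul_smul, mul_comm, ← smul_smul, hy, smul_zero]
      refine ⟨⟨c, mem_nonZeroDivisors_of_ne_zero hc⟩, ?_⟩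
      refine LinearMap.ext fun x => ?_
      show c • f x = 0
      exact hall x
    · rintro ⟨⟨a, ha⟩, hafe⟩
      have ha' : a ≠ 0 := nonZeroDivisors.ne_zero ha
      refine Submodule.linearMap_qext _ ?_
      ext x
      show φ f (Submodule.Quotient.mk x) = 0
      rw [hφ_apply]
      refine (Submodule.Quotient.mk_eq_zero tM).2 ((htM _).2 ⟨a, ha', ?_⟩)
      have := LinearMap.congr_fun hafe x
      simpa using this
  -- surjectivity of `φ`, using the vanishing of `Ext¹`
  have hsurj : Function.Surjective φ := by
    intro g
    -- the short exact sequence `0 → tM → M → M/tM → 0` in `ModuleCat Λ`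
    let S : ShortComplex (ModuleCat.{u} Λ) := ShortComplex.mk
      (X₁ := ModuleCat.of Λ tM) (X₂ := ModuleCat.of Λ M) (X₃ := ModuleCat.of Λ (M ⧸ tM))
      (ModuleCat.ofHom tM.subtype) (ModuleCat.ofHom tM.mkQ)
      (by ext ⟨x, hx⟩; exact (Submodule.Quotient.mk_eq_zero tM).2 hx)
    have hS : S.ShortExact := by
      have mono : Mono S.f := (ModuleCat.mono_iff_injective _).2 tM.injective_subtype
      have epi : Epi S.g := (ModuleCat.epi_iff_surjective _).2 tM.mkQ_surjective
      exact
        { exact := (S.moduleCat_exact_iff).2 (fun x hx =>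
            ⟨⟨x, (Submodule.Quotient.mk_eq_zero tM).1 hx⟩, rfl⟩) }
    obtain ⟨f, hf⟩ := ExtAuxForStatement2.lift_of_subsingleton_ext hS
      (ModuleCat.of Λ L) hExt (ModuleCat.ofHom (g ∘ₗ tL.mkQ))
    refine ⟨f.hom, ?_⟩
    refine Submodule.linearMap_qext _ ?_
    ext x
    show φ f.hom (Submodule.Quotient.mk x) = g (Submodule.Quotient.mk x)
    rw [hφ_apply]
    have := LinearMap.congr_fun (congrArg ModuleCat.Hom.hom hf) x
    exact this
  exact ⟨(Submodule.quotEquivOfEq _ _ hker.symm).trans (φ.quotKerEquivOfSurjective hsurj)⟩
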